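/- Let X be a generalized tree, a ∈ X, and (a_z)_{z∈ℤ}, (b_z)_{z∈ℤ} families of elements of X such that Stem(a,(a_z)) and Stem(a,(b_z)) both hold. Then there is k ∈ ℤ such that a_z = b_{z+k} for every z ∈ ℤ; in particular {a_z : z ∈ ℤ} = {b_z : z ∈ ℤ}. -/

import Mathlib

/-- `X` is a generalized tree: the set of strict predecessors of every element is
linearly ordered. -/
def IsGenTree (X : Type*) [PartialOrder X] : Prop :=
  ∀ x y z : X, y < x → z < x → y ≤ z ∨ z ≤ y

/-- `a` is well-founded: the restriction of `<` to its set of strict predecessors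
is a well-founded relation. -/
def WFElem {X : Type*} [PartialOrder X] (a : X) : Prop :=
  (Set.Iio a).WellFoundedOn (· < ·)

/-- `Root a b`: `a` is well-founded, `b` is not, `a ≤ b`, and no well-founded `c`
satisfies `a < c ≤ b`. -/
def Root {X : Type*} [PartialOrder X] (a b : X) : Prop :=
  WFElem a ∧ ¬ WFElem b ∧ a ≤ b ∧ ¬ ∃ c : X, a < c ∧ c ≤ b ∧ WFElem c

/-- `Stem a f`: the family `f : ℤ → X` is injective, order-isomorphic to `ℤ`,
consists of roots over `a`, and every root over `a` is either in the family or above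
all of it. -/
def Stem {X : Type*} [PartialOrder X] (a : X) (f : ℤ → X) : Prop :=
  Function.Injective f ∧ (∀ z z' : ℤ, f z ≤ f z' ↔ z ≤ z') ∧
    (∀ z : ℤ, Root a (f z)) ∧
    ∀ y : X, Root a y → (∃ z : ℤ, y = f z) ∨ ∀ z : ℤ, f z < y

/-- Every element of one stem over `a` lies in the other stem over `a`. -/
private lemma stem_sub {X : Type*} [PartialOrder X] {a : X} {f g : ℤ → X}
    (hf : Stem a f) (hg : Stem a g) : ∀ z : ℤ, ∃ w : ℤ, f z = g w := by
  obtain ⟨hfinj, hford, hfroot, hfmax⟩ := hf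
  obtain ⟨hginj, hgord, hgroot, hgmax⟩ := hg
  intro z
  rcases hgmax (f z) (hfroot z) with h | h
  · exact h
  exfalso
  have hsub : ∀ w : ℤ, ∃ z' : ℤ, g w = f z' := by
    intro w
    rcases hfmax (g w) (hgroot w) with h' | h'
    · exact h'
    · exact absurd (h w) (lt_asymm (h' z))
  choose ψ hψ using hsub
  have hlt : ∀ w : ℤ, ψ w < z := by
    intro w
    have hlt1 : f (ψ w) < f z := hψ w ▸ h w
    have hle := (hford _ _).1 hlt1.le
    rcases hle.lt_or_eq with h1 | h1
    · exact h1
    · exact absurd (h1 ▸ hlt1) (lt_irrefl _)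
  have hmono : StrictMono ψ := by
    intro w w' hw
    have hglt : g w < g w' :=
      lt_of_le_of_ne ((hgord w w').2 hw.le) fun e => hw.ne (hginj e)
    have hlt2 : f (ψ w) < f (ψ w') := by rw [← hψ, ← hψ]; exact hglt
    have hle := (hford _ _).1 hlt2.le
    exact lt_of_le_of_ne hle fun e => absurd (e ▸ hlt2) (lt_irrefl _)
  have hge : ∀ n : ℕ, ψ 0 + n ≤ ψ n := by
    intro n
    induction n with
    | zero => simp
    | succ n ih =>
      have h2 : ψ (n : ℤ) < ψ ((n + 1 : ℕ) : ℤ) :=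
        hmono (by exact_mod_cast Nat.lt_succ_self n)
      push_cast at h2 ⊢
      omega
  have hA := hlt (((z - ψ 0).toNat + 1 : ℕ) : ℤ)
  have hB := hge ((z - ψ 0).toNat + 1)
  push_cast at hA hB
  omega

/-- Two stems over the same point `a` of a generalized tree differ by a shift of `ℤ`;
in particular they have the same range. -/
theorem stmt8 {X : Type*} [PartialOrder X] (htree : IsGenTree X) (a : X)
    (f g : ℤ → X) (hf : Stem a f) (hg : Stem a g) :
    (∃ k : ℤ, ∀ z : ℤ, f z = g (z + k)) ∧ Set.range f = Set.range g := by
  obtain ⟨φ, hφ⟩ : ∃ φ : ℤ → ℤ, ∀ z, f z = g (φ z) := by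
    have h := stem_sub hf hg
    exact ⟨fun z => (h z).choose, fun z => (h z).choose_spec⟩
  obtain ⟨ψ, hψ⟩ : ∃ ψ : ℤ → ℤ, ∀ w, g w = f (ψ w) := by
    have h := stem_sub hg hf
    exact ⟨fun w => (h w).choose, fun w => (h w).choose_spec⟩
  obtain ⟨hfinj, hford, -, -⟩ := hf
  obtain ⟨hginj, hgord, -, -⟩ := hg
  have hsurj : Function.Surjective φ := fun w =>
    ⟨ψ w, hginj (by rw [← hφ, ← hψ])⟩
  have hflt : ∀ z z' : ℤ, f z < f z' ↔ z < z' := by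
    intro z z'
    constructor
    · intro h
      exact lt_of_le_of_ne ((hford z z').1 h.le) fun e => h.ne (congrArg f e)
    · intro h
      exact lt_of_le_of_ne ((hford z z').2 h.le) fun e => h.ne (hfinj e)
  have hglt : ∀ z z' : ℤ, g z < g z' ↔ z < z' := by
    intro z z'
    constructor
    · intro h
      exact lt_of_le_of_ne ((hgord z z').1 h.le) fun e => h.ne (congrArg g e)
    · intro h
      exact lt_of_le_of_ne ((hgord z z').2 h.le) fun e => h.ne (hginj e)
  have hmono : StrictMono φ := by
    intro z z' hz
    have : g (φ z) < g (φ z') := by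
      rw [← hφ, ← hφ]
      exact (hflt z z').2 hz
    exact (hglt _ _).1 this
  have hsucc : ∀ z : ℤ, φ (z + 1) = φ z + 1 := by
    intro z
    obtain ⟨w, hw⟩ := hsurj (φ z + 1)
    have h1 : φ z < φ (z + 1) := hmono (by omega)
    have h2 : z < w := hmono.lt_iff_lt.mp (by omega)
    have h3 : φ (z + 1) ≤ φ w := hmono.le_iff_le.mpr (by omega)
    omega
  have hlin : ∀ z : ℤ, φ z = z + φ 0 := by
    intro z
    induction z using Int.induction_on with
    | zero => omega
    | succ n ih =>
      have := hsucc n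
      omega
    | pred n ih =>
      have := hsucc (-(n : ℤ) - 1)
      have h2 : (-(n : ℤ) - 1) + 1 = -(n : ℤ) := by omega
      rw [h2] at this
      omega
  constructor
  · exact ⟨φ 0, fun z => by rw [hφ z, hlin z]⟩
  · ext x
    simp only [Set.mem_range]
    constructor
    · rintro ⟨z, rfl⟩; exact ⟨φ z, (hφ z).symm⟩
    · rintro ⟨w, rfl⟩; exact ⟨ψ w, (hψ w).symm⟩
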